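/- Let M be a positroid on [n] without coloops. Then for any proper subset A ⊊ [n], rk_M(A) ≤ |A| − cw_M(A). -/

import Mathlib

open Finset

attribute [local instance] Classical.propDecidable

noncomputable section

/-- A matroid on `Fin n`, presented by its collection of bases (basis exchange axiom). -/
structure FinMatroid (n : ℕ) where
  bases : Finset (Finset (Fin n))
  bases_nonempty : bases.Nonempty
  exchange : ∀ B₁ ∈ bases, ∀ B₂ ∈ bases, ∀ x ∈ B₁ \ B₂,
      ∃ y ∈ B₂ \ B₁, insert y (B₁.erase x) ∈ bases

/-- Rank function associated to a collection of bases: `rk S = max |S ∩ B|`. -/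
def rkOf {n : ℕ} (Bs : Finset (Finset (Fin n))) (S : Finset (Fin n)) : ℕ :=
  Bs.sup fun B => (S ∩ B).card

/-- Rank function of a matroid. -/
def rk {n : ℕ} (M : FinMatroid n) (S : Finset (Fin n)) : ℕ := rkOf M.bases S

/-- Independence w.r.t. a collection of bases. -/
def Indep {n : ℕ} (Bs : Finset (Finset (Fin n))) (S : Finset (Fin n)) : Prop :=
  ∃ B ∈ Bs, S ⊆ B

/-- A circuit: a dependent set all of whose proper subsets are independent. -/
def IsCircuit {n : ℕ} (Bs : Finset (Finset (Fin n))) (C : Finset (Fin n)) : Prop :=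
  ¬ Indep Bs C ∧ ∀ D ⊆ C, D ≠ C → Indep Bs D

/-- `M` is a quotient of `N`: every circuit of `N` is a union of circuits of `M`. -/
def IsQuotient {n : ℕ} (BsM BsN : Finset (Finset (Fin n))) : Prop :=
  ∀ C, IsCircuit BsN C → ∃ 𝒟 : Finset (Finset (Fin n)),
    (∀ D ∈ 𝒟, IsCircuit BsM D) ∧ C = 𝒟.sup id

/-- The values of a finset under the key `f`, sorted increasingly. -/
def sortedVals {n : ℕ} (f : Fin n → ℕ) (A : Finset (Fin n)) : List ℕ :=
  (A.image f).sort (· ≤ ·)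

/-- Gale order (w.r.t. the total order on `Fin n` given by an injective key `f`):
`A ≤ B` iff the `i`-th smallest element of `A` is `≤` the `i`-th smallest element of `B`. -/
def galeLE {n : ℕ} (f : Fin n → ℕ) (A B : Finset (Fin n)) : Prop :=
  List.Forall₂ (· ≤ ·) (sortedVals f A) (sortedVals f B)

/-- Position of `a` in the cyclic order starting at `i` (so `cpos i i = 0`). -/
def cpos {n : ℕ} (i a : Fin n) : ℕ := ((a - i : Fin n) : ℕ)

/-- Cyclic half-open interval `(a, b]`; in particular `(a, a] = ∅`. -/
def cycIoc {n : ℕ} (a b : Fin n) : Finset (Fin n) :=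
  Finset.univ.filter fun x => cpos a x ≠ 0 ∧ cpos a x ≤ cpos a b

/-- Cyclic closed interval `[a, b]`. -/
def cycIcc {n : ℕ} (a b : Fin n) : Finset (Fin n) :=
  Finset.univ.filter fun x => cpos a x ≤ cpos a b

/-- A decorated permutation: a permutation together with a coloring in `{0, ±1}`
whose zero set is exactly the set of non-fixed points. -/
structure DecoratedPerm (n : ℕ) where
  perm : Equiv.Perm (Fin n)
  col : Fin n → ℤ
  col_range : ∀ i, col i = 0 ∨ col i = 1 ∨ col i = -1
  col_zero_iff : ∀ i, col i = 0 ↔ perm i ≠ i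

/-- Grassmann necklace term `I_i = {a : a <_i π⁻¹(a) or col a = -1}`. -/
def neck {n : ℕ} (π : DecoratedPerm n) (i : Fin n) : Finset (Fin n) :=
  Finset.univ.filter fun a => cpos i a < cpos i (π.perm.symm a) ∨ π.col a = -1

/-- Grassmann conecklace term `J_i = π⁻¹(I_i)`. -/
def coneck {n : ℕ} (π : DecoratedPerm n) (i : Fin n) : Finset (Fin n) :=
  (neck π i).image π.perm.symm

/-- Rank of a decorated permutation: the common size of its necklace terms. -/
def drank {n : ℕ} (π : DecoratedPerm n) : ℕ :=
  if h : 0 < n then (neck π ⟨0, h⟩).card else 0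

/-- Grassmann interval `S^π_i = (π⁻¹(i), i]`, with the coloop convention `[n]`
(the loop convention `∅` is automatic since `(i, i] = ∅`). -/
def SInt {n : ℕ} (π : DecoratedPerm n) (i : Fin n) : Finset (Fin n) :=
  if π.col i = -1 then Finset.univ else cycIoc (π.perm.symm i) i

/-- Shift interval `S^{π,σ}_i = (π⁻¹(i), σ⁻¹(i)]`, with the convention `[n]` when
`i` is a loop of `π` and a coloop of `σ`. -/
def shiftInt {n : ℕ} (π σ : DecoratedPerm n) (i : Fin n) : Finset (Fin n) :=
  if π.col i = 1 ∧ σ.col i = -1 then Finset.univ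
  else cycIoc (π.perm.symm i) (σ.perm.symm i)

/-- CW-arrow starting at `i`: the cyclic interval from `i` to `π(i)` (all of `[n]` for coloops). -/
def cwArrow {n : ℕ} (π : DecoratedPerm n) (i : Fin n) : Finset (Fin n) :=
  if π.col i = -1 then Finset.univ
  else Finset.univ.filter fun j => cpos i j ≤ cpos i (π.perm i)

/-- The CW-function: the number of CW-arrows contained in `A` (for `A ≠ [n]`),
and `n - rk(M)` for `A = [n]`. -/
def cw {n : ℕ} (π : DecoratedPerm n) (A : Finset (Fin n)) : ℕ :=
  if A = Finset.univ then n - drank π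
  else (Finset.univ.filter fun i => cwArrow π i ⊆ A).card

/-- Bases of the positroid associated with a decorated permutation: sets that are
above every necklace term in the corresponding cyclic Gale order. -/
def positroidBases {n : ℕ} (π : DecoratedPerm n) : Finset (Finset (Fin n)) :=
  Finset.univ.filter fun B => ∀ i, galeLE (cpos i) (neck π i) B

/-- `σ` is the cyclic shift `ρ_A(π)`: positions in `A` are frozen; at a position
`i ∉ A` the new value is `π(j)` where `j` is the maximum of `Aᶜ` in the cyclic order
starting at `i`; new fixed points are decorated as loops. -/
def IsCyclicShift {n : ℕ} (π σ : DecoratedPerm n) (A : Finset (Fin n)) : Prop :=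
  (∀ i ∈ A, σ.perm i = π.perm i ∧ σ.col i = π.col i) ∧
  (∀ i ∉ A, ∃ j, j ∉ A ∧ (∀ j', j' ∉ A → cpos i j' ≤ cpos i j) ∧ σ.perm i = π.perm j) ∧
  (∀ i ∉ A, σ.col i = if σ.perm i = i then 1 else 0)

/-- The shift intervals `S^{π,σ}_i` partition `[n]`. -/
def ShiftPartition {n : ℕ} (π σ : DecoratedPerm n) : Prop :=
  (∀ i j : Fin n, i ≠ j → Disjoint (shiftInt π σ i) (shiftInt π σ j)) ∧
  Finset.univ.biUnion (shiftInt π σ) = Finset.univ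

/-- `C` is a cyclic component of `A`: a maximal cyclic interval contained in `A`. -/
def IsCycComponent {n : ℕ} [NeZero n] (A C : Finset (Fin n)) : Prop :=
  ∃ a b : Fin n, C = cycIcc a b ∧ C ⊆ A ∧ (a - 1) ∉ A ∧ (b + 1) ∉ A

/-- Bases of the lattice path matroid `M[U, L]`. -/
def lpmBases {n : ℕ} (U L : Finset (Fin n)) : Finset (Finset (Fin n)) :=
  Finset.univ.filter fun B => galeLE Fin.val U B ∧ galeLE Fin.val B L
end

open scoped Fin.CommRing Fin.NatCast

section myhelpers


set_option linter.unusedSectionVars false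
variable {n : ℕ} [NeZero n]

lemma cpos_lt (i a : Fin n) : cpos i a < n := (a - i).isLt

lemma cpos_self (i : Fin n) : cpos i i = 0 := by simp [cpos]

lemma cpos_inj {i a b : Fin n} (h : cpos i a = cpos i b) : a = b := by
  have := Fin.val_injective h
  exact sub_left_injective this

lemma cpos_eq_zero_iff {i a : Fin n} : cpos i a = 0 ↔ a = i := by
  constructor
  · intro h; exact cpos_inj (i := i) (a := a) (b := i) (by simp [cpos_self, h])
  · rintro rfl; exact cpos_self _

lemma val_sub_of_le {p q : Fin n} (h : q.val ≤ p.val) : (p - q).val = p.val - q.val := by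
  rw [Fin.sub_def]
  have h1 : n - q.val + p.val = (p.val - q.val) + n := by have := p.isLt; omega
  simp only [h1, Nat.add_mod_right]
  exact Nat.mod_eq_of_lt (by have := p.isLt; omega)

lemma cpos_sub_one (i : Fin n) : cpos i (i - 1) = n - 1 := by
  unfold cpos
  have h : i - 1 - i = -1 := by ring
  rw [h]
  obtain ⟨m, rfl⟩ := Nat.exists_eq_succ_of_ne_zero (NeZero.ne n)
  simp [Fin.coe_neg_one]

lemma cpos_mod (a k x : Fin n) : cpos a x = (cpos a k + cpos k x) % n := by
  unfold cpos
  have h : x - a = (k - a) + (x - k) := by ring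
  rw [h, Fin.val_add]

lemma cpos_add_of_lt {a k x : Fin n} (h : cpos a k + cpos k x < n) :
    cpos a x = cpos a k + cpos k x := by
  rw [cpos_mod a k x, Nat.mod_eq_of_lt h]

lemma cpos_chain {a y x : Fin n} (h : cpos a y ≤ cpos a x) :
    cpos a y + cpos y x = cpos a x := by
  have hy : cpos y x = cpos a x - cpos a y := by
    unfold cpos
    have h1 : x - y = (x - a) - (y - a) := by ring
    rw [h1, val_sub_of_le h]
  rw [hy]; omega

lemma cpos_chain' {a y x : Fin n} (h : cpos a y ≤ cpos a x) :
    cpos y x = cpos a x - cpos a y := by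
  have := cpos_chain h; omega

lemma cpos_natCast (x : Fin n) {s : ℕ} (hs : s < n) : cpos (x - (s : Fin n)) x = s := by
  unfold cpos
  have : x - (x - (s:Fin n)) = (s:Fin n) := by ring
  rw [this, Fin.val_natCast, Nat.mod_eq_of_lt hs]

lemma sub_cpos (y x : Fin n) : x - ((cpos y x : ℕ) : Fin n) = y := by
  unfold cpos
  rw [Fin.cast_val_eq_self]
  ring



lemma cpos_pred {a y : Fin n} (h : 0 < cpos a y) : cpos a (y - 1) = cpos a y - 1 := by
  have hn2 : 2 ≤ n := by have := cpos_lt a y; omega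
  have hv1 : ((1 : Fin n) : ℕ) = 1 := by rw [Fin.val_one']; exact Nat.mod_eq_of_lt hn2
  have h1 : y - 1 - a = (y - a) - 1 := by ring
  unfold cpos
  rw [h1, val_sub_of_le (by rw [hv1]; exact h), hv1]

lemma countP_le_of_forall2 {u v : List ℕ} (c : ℕ) (h : List.Forall₂ (· ≤ ·) u v) :
    v.countP (fun x => x ≤ c) ≤ u.countP (fun x => x ≤ c) := by
  induction h with
  | nil => simp
  | @cons a b u' v' hab htl ih =>
    simp only [List.countP_cons, decide_eq_true_eq]
    by_cases hb : b ≤ c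
    · have ha : a ≤ c := le_trans hab hb
      simp only [ha, hb, if_true]; omega
    · simp only [hb, if_false]; omega

lemma card_filter_eq_countP_sort (T : Finset ℕ) (c : ℕ) :
    (T.filter fun v => v ≤ c).card = (T.sort (· ≤ ·)).countP (fun v => v ≤ c) := by
  have h1 : ((T.sort (· ≤ ·)) : Multiset ℕ) = T.val := Finset.sort_eq _ _
  have h2 : Multiset.countP (fun v => v ≤ c) ((T.sort (· ≤ ·)) : Multiset ℕ)
      = (T.sort (· ≤ ·)).countP (fun v => decide (v ≤ c)) := Multiset.coe_countP _ _
  rw [h1] at h2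
  rw [← h2, Multiset.countP_eq_card_filter]
  rfl

lemma gale_count {f : Fin n → ℕ} (hf : Function.Injective f)
    {I B : Finset (Fin n)} (h : galeLE f I B) (c : ℕ) :
    (B.filter fun x => f x ≤ c).card ≤ (I.filter fun x => f x ≤ c).card := by
  have key : ∀ S : Finset (Fin n), (S.filter fun x => f x ≤ c).card
      = (sortedVals f S).countP (fun v => v ≤ c) := by
    intro S
    have h2 : (S.image f).filter (fun v => v ≤ c) = ((S.filter fun x => f x ≤ c).image f) :=
      Finset.filter_image
    calc (S.filter fun x => f x ≤ c).card
        = ((S.filter fun x => f x ≤ c).image f).card :=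
          (Finset.card_image_of_injective _ hf).symm
      _ = ((S.image f).filter (fun v => v ≤ c)).card := by rw [h2]
      _ = (sortedVals f S).countP (fun v => v ≤ c) := card_filter_eq_countP_sort _ c
  rw [key B, key I]
  exact countP_le_of_forall2 c h

lemma mem_cwArrow_self (pi : DecoratedPerm n) (hco : ∀ i, pi.col i ≠ -1) (k : Fin n) :
    k ∈ cwArrow pi k := by
  rw [cwArrow, if_neg (hco k)]
  simp [cpos_self]
end myhelpers
/-- For a positroid without coloops and any proper subset `A ⊊ [n]`,
`rk(A) ≤ |A| - cw(A)`. -/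
theorem stmt12 (n : ℕ) (π : DecoratedPerm n) (hco : ∀ i, π.col i ≠ -1)
    (A : Finset (Fin n)) (hA : A ≠ Finset.univ) :
    rkOf (positroidBases π) A + cw π A ≤ A.card := by
  rcases Nat.eq_zero_or_pos n with h0 | hn
  · exfalso; apply hA; apply Finset.eq_univ_of_forall; intro x
    exact absurd x.isLt (by omega)
  have : NeZero n := ⟨hn.ne'⟩
  obtain ⟨z, hz⟩ : ∃ z, z ∉ A := by
    by_contra h; push_neg at h; exact hA (Finset.eq_univ_of_forall h)
  have hex : ∀ x : Fin n, ∃ t, x - (((t+1 : ℕ)) : Fin n) ∉ A := by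
    intro x
    by_cases hx : x ∈ A
    · refine ⟨cpos z x - 1, ?_⟩
      have hzx : z ≠ x := fun h => hz (h ▸ hx)
      have h1 : 1 ≤ cpos z x :=
        Nat.one_le_iff_ne_zero.2 (fun h => hzx (cpos_eq_zero_iff.1 h).symm)
      have h2 : cpos z x - 1 + 1 = cpos z x := by omega
      rw [h2, sub_cpos]; exact hz
    · refine ⟨n - 1, ?_⟩
      have h2 : n - 1 + 1 = n := by omega
      rw [h2]
      simpa [Fin.natCast_self] using hx
  set d : Fin n → ℕ := fun x => Nat.find (hex x) with hd
  set g : Fin n → Fin n := fun x => x - ((d x : ℕ) : Fin n) with hg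
  have hdspec : ∀ x, x - (((d x + 1 : ℕ)) : Fin n) ∉ A := by
    intro x; simp only [hd]; exact Nat.find_spec (hex x)
  have hdmin : ∀ x t, t < d x → x - (((t+1 : ℕ)) : Fin n) ∈ A := by
    intro x t ht; simp only [hd] at ht
    by_contra hc
    have := Nat.find_le (h := hex x) (n := t) hc
    omega
  have hdle : ∀ x t, (x - (((t+1 : ℕ)) : Fin n) ∉ A) → d x ≤ t := by
    intro x t ht; simp only [hd]; exact Nat.find_le ht
  clear hd
  have hdlt : ∀ x, d x < n := by
    intro x
    by_cases hx : x ∈ A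
    · have hzx : z ≠ x := fun h => hz (h ▸ hx)
      have h1 : 1 ≤ cpos z x :=
        Nat.one_le_iff_ne_zero.2 (fun h => hzx (cpos_eq_zero_iff.1 h).symm)
      have h2 : cpos z x - 1 + 1 = cpos z x := by omega
      have h3 := hdle x (cpos z x - 1) (by rw [h2, sub_cpos]; exact hz)
      have := cpos_lt z x
      omega
    · have h2 : n - 1 + 1 = n := by omega
      have h3 := hdle x (n - 1) (by rw [h2]; simpa [Fin.natCast_self] using hx)
      omega
  have hcgx : ∀ x, cpos (g x) x = d x := by
    intro x; rw [hg]; exact cpos_natCast x (hdlt x)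
  have hg_sub_one : ∀ x, g x - 1 ∉ A := by
    intro x
    have h1 : g x - 1 = x - (((d x + 1 : ℕ)) : Fin n) := by
      rw [hg]; push_cast; ring
    rw [h1]; exact hdspec x
  have hP1 : ∀ x ∈ A, ∀ y, cpos (g x) y ≤ cpos (g x) x → y ∈ A := by
    intro x hx y hy
    have hchain := cpos_chain hy
    rw [hcgx] at hchain
    set s := cpos y x with hs
    rcases Nat.eq_zero_or_pos s with h0 | hpos
    · rwa [cpos_eq_zero_iff.1 h0] at hx
    · have hmin := hdmin x (s - 1) (by omega)
      have h2 : s - 1 + 1 = s := by omega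
      rw [h2] at hmin
      rw [← sub_cpos y x]; exact hmin
  have hP3 : ∀ x ∈ A, ∀ a : Fin n, a - 1 ∉ A →
      (∀ y, cpos a y ≤ cpos a x → y ∈ A) → g x = a := by
    intro x hx a ha1 hH
    have hu : d x ≤ cpos a x := by
      apply hdle
      have h1 : x - (((cpos a x + 1 : ℕ)) : Fin n) = a - 1 := by
        push_cast
        rw [sub_add_eq_sub_sub, sub_cpos]
      rw [h1]; exact ha1
    have hga : cpos a (g x) = cpos a x - d x := by
      rw [hg]
      show cpos a (x - ((d x : ℕ) : Fin n)) = cpos a x - d x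
      unfold cpos
      have h1 : x - ((d x : ℕ) : Fin n) - a = (x - a) - ((d x : ℕ) : Fin n) := by ring
      rw [h1, val_sub_of_le]
      · rw [Fin.val_natCast, Nat.mod_eq_of_lt (hdlt x)]
      · rw [Fin.val_natCast, Nat.mod_eq_of_lt (hdlt x)]; exact hu
    by_contra hne
    have hpos : 0 < cpos a (g x) :=
      Nat.pos_of_ne_zero (fun h => hne (cpos_eq_zero_iff.1 h))
    apply hg_sub_one x
    apply hH
    rw [cpos_pred hpos]
    omega
  have hgfix : ∀ x ∈ A, ∀ y, cpos (g x) y ≤ cpos (g x) x → g y = g x := by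
    intro x hx y hy
    have hyA : y ∈ A := hP1 x hx y hy
    refine hP3 y hyA (g x) (hg_sub_one x) ?_
    intro w hw
    exact hP1 x hx w (le_trans hw hy)
  set L : Finset (Fin n) := A.filter (fun a => a - 1 ∉ A) with hL
  have hgL' : ∀ x ∈ A, g x ∈ L := by
    intro x hx
    refine Finset.mem_filter.2 ⟨hP1 x hx (g x) (by rw [cpos_self]; exact Nat.zero_le _),
      hg_sub_one x⟩
  set S : Finset (Fin n) := Finset.univ.filter (fun k => cwArrow π k ⊆ A) with hS
  have hcw : cw π A = S.card := by rw [cw, if_neg hA]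
  have hkS : ∀ k ∈ S, k ∈ A := by
    intro k hk
    exact (Finset.mem_filter.1 hk).2 (mem_cwArrow_self π hco k)
  have hScard : S.card ≤ A.card := Finset.card_le_card hkS
  have key : ∀ B ∈ positroidBases π, (A ∩ B).card + S.card ≤ A.card := by
    intro B hB
    have hGale : ∀ i, galeLE (cpos i) (neck π i) B := (Finset.mem_filter.1 hB).2
    rw [Finset.card_eq_sum_card_fiberwise (f := g) (t := L)
        (fun x hx => hgL' x (Finset.mem_inter.1 hx).1),
      Finset.card_eq_sum_card_fiberwise (f := g) (t := L) (fun k hk => hgL' k (hkS k hk)),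
      Finset.card_eq_sum_card_fiberwise (f := g) (t := L) hgL',
      ← Finset.sum_add_distrib]
    apply Finset.sum_le_sum
    intro a haL
    obtain ⟨haA, ha1⟩ := Finset.mem_filter.1 haL
    set Fib : Finset (Fin n) := A.filter (fun x => g x = a) with hFib
    -- Fib is a downset that equals the fiber of a
    have hmemFib : ∀ x, x ∈ Fib ↔ x ∈ A ∧ g x = a := by
      intro x; rw [hFib]; exact Finset.mem_filter
    have hdown : ∀ x ∈ Fib, ∀ y, cpos a y ≤ cpos a x → y ∈ Fib := by
      intro x hx y hy
      obtain ⟨hxA, hgx⟩ := (hmemFib x).1 hx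
      rw [← hgx] at hy
      rw [hmemFib]
      have hyA : y ∈ A := hP1 x hxA y (by rw [hcgx]; rw [hcgx] at hy; exact hy)
      exact ⟨hyA, by rw [hgfix x hxA y (by rw [hcgx]; rw [hcgx] at hy; exact hy), hgx]⟩
    have haFib : a ∈ Fib := by
      rw [hmemFib]
      refine ⟨haA, hP3 a haA a ha1 ?_⟩
      intro y hy
      rw [cpos_self] at hy
      have : y = a := cpos_eq_zero_iff.1 (Nat.le_zero.1 hy)
      rwa [this]
    obtain ⟨b, hbF, hbmax⟩ := Finset.exists_max_image Fib (cpos a) ⟨a, haFib⟩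
    have hFib_eq : Fib = Finset.univ.filter (fun y => cpos a y ≤ cpos a b) := by
      ext y
      simp only [Finset.mem_filter, Finset.mem_univ, true_and]
      exact ⟨fun hy => hbmax y hy, fun hy => hdown b hbF y hy⟩
    have hbA : b ∈ A := ((hmemFib b).1 hbF).1
    have hblt : cpos a b < n - 1 := by
      have hne : b ≠ a - 1 := fun h => ha1 (h ▸ hbA)
      have h2 := cpos_lt a b
      rcases Nat.lt_or_ge (cpos a b) (n-1) with h | h
      · exact h
      · exfalso
        apply hne
        apply cpos_inj (i := a)
        rw [cpos_sub_one]
        omega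
    -- arrows assigned to a
    set Sa : Finset (Fin n) := S.filter (fun k => g k = a) with hSa
    have hSaFib : ∀ k ∈ Sa, π.perm k ∈ Fib \ neck π a := by
      intro k hk
      obtain ⟨hkS', hgk⟩ := Finset.mem_filter.1 hk
      have hCk : cwArrow π k ⊆ A := (Finset.mem_filter.1 hkS').2
      have hkA : k ∈ A := hCk (mem_cwArrow_self π hco k)
      have harrow : cwArrow π k = Finset.univ.filter (fun j => cpos k j ≤ cpos k (π.perm k)) := by
        rw [cwArrow, if_neg (hco k)]
      have hmemArrow : ∀ j, cpos k j ≤ cpos k (π.perm k) → j ∈ cwArrow π k := by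
        intro j hj
        rw [harrow]
        exact Finset.mem_filter.2 ⟨Finset.mem_univ j, hj⟩
      have hc : cpos a k ≤ n - 2 := by
        have hne : k ≠ a - 1 := fun h => ha1 (h ▸ hkA)
        have h2 := cpos_lt a k
        rcases Nat.lt_or_ge (cpos a k) (n-1) with h | h
        · omega
        · exfalso
          apply hne
          apply cpos_inj (i := a)
          rw [cpos_sub_one]; omega
      have hcm : cpos a k + cpos k (π.perm k) < n - 1 := by
        by_contra hge
        push_neg at hge
        apply ha1
        apply hCk
        apply hmemArrow
        have h8 := cpos_chain (a := a) (y := k) (x := a - 1) (by rw [cpos_sub_one]; omega)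
        rw [cpos_sub_one] at h8
        omega
      have hπk : cpos a (π.perm k) = cpos a k + cpos k (π.perm k) :=
        cpos_add_of_lt (by omega)
      have hπkA : π.perm k ∈ A := hCk (hmemArrow _ le_rfl)
      have hπkFib : π.perm k ∈ Fib := by
        rw [hmemFib]
        refine ⟨hπkA, hP3 _ hπkA a ha1 ?_⟩
        intro y hy
        rw [hπk] at hy
        by_cases hyc : cpos a y ≤ cpos a k
        · rw [← hgk] at hyc
          exact hP1 k hkA y (by rw [hcgx]; rw [hcgx] at hyc; exact hyc)
        · push_neg at hyc
          have h9 : cpos k y = cpos a y - cpos a k := cpos_chain' (le_of_lt hyc)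
          exact hCk (hmemArrow y (by omega))
      refine Finset.mem_sdiff.2 ⟨hπkFib, ?_⟩
      rw [neck]
      simp only [Finset.mem_filter, Finset.mem_univ, true_and]
      push_neg
      constructor
      · rw [Equiv.symm_apply_apply, hπk]
        omega
      · exact hco _
    have hcardA : Sa.card ≤ (Fib \ neck π a).card := by
      apply Finset.card_le_card_of_injOn π.perm hSaFib
      intro u _ v _ h
      exact π.perm.injective h
    -- Gale bound
    have hinter : ∀ T : Finset (Fin n),
        Fib ∩ T = T.filter (fun y => cpos a y ≤ cpos a b) := by
      intro T
      ext y
      rw [hFib_eq]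
      simp only [Finset.mem_inter, Finset.mem_filter, Finset.mem_univ, true_and]
      tauto
    have hcardB : (Fib ∩ B).card ≤ (Fib ∩ neck π a).card := by
      rw [hinter B, hinter (neck π a)]
      exact gale_count (fun u v h => cpos_inj h) (hGale a) (cpos a b)
    -- assemble
    have hAB : (A ∩ B).filter (fun x => g x = a) = Fib ∩ B := by
      ext x
      simp only [Finset.mem_filter, Finset.mem_inter, hmemFib]
      tauto
    have e1 : ((A ∩ B).filter (fun x => g x = a)).card = (Fib ∩ B).card := by
      congr 1
    have e2 : ((S.filter (fun x => g x = a))).card = Sa.card := by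
      congr 1
    have e3 : ((A.filter (fun x => g x = a))).card = Fib.card := by
      congr 1
    have := Finset.card_sdiff_add_card_inter Fib (neck π a)
    omega
  rcases Finset.eq_empty_or_nonempty (positroidBases π) with hemp | hne
  · rw [hcw, rkOf, hemp]
    simpa using hScard
  · have hsup : rkOf (positroidBases π) A ≤ A.card - S.card := by
      rw [rkOf]
      apply Finset.sup_le
      intro B hB
      have := key B hB
      omega
    rw [hcw]
    have h2 : S.card ≤ A.card := hScard
    omega
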